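/- For self-adjoint operators S_1, …, S_s on ℂ^d and a fixed orthonormal basis (q_i), the sum Σ_i S_i is majorized by Σ_i S_i↓, where S↓ := Σ_j λ_j(S)|q_j⟩⟨q_j| with eigenvalues ordered non-increasingly. -/

import Mathlib

open Finset Matrix
open scoped Kronecker ComplexOrder

/-- `x` majorizes `y`: every subset-sum of `y` is dominated by some subset-sum of `x`
of the same cardinality (equivalently, all top-`k` partial sums of the non-increasing
rearrangements dominate), and the total sums agree. -/
def Majorizes {ι κ : Type*} [Fintype ι] [Fintype κ] (x : ι → ℝ) (y : κ → ℝ) : Prop :=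
  (∀ t : Finset κ, ∃ s : Finset ι, s.card = t.card ∧ ∑ j ∈ t, y j ≤ ∑ i ∈ s, x i) ∧
    ∑ j, y j = ∑ i, x i
/-- The non-increasing rearrangement `x↓` of a vector `x ∈ ℝ^d`. -/
noncomputable def sortDesc {d : ℕ} (x : Fin d → ℝ) : Fin d → ℝ :=
  x ∘ ⇑(Tuple.sort (fun j => OrderDual.toDual (x j)))

/-- `S↓`: the diagonal matrix (in the fixed standard basis) whose diagonal consists of the
eigenvalues of `S` in non-increasing order. -/
noncomputable def matDown {d : ℕ} {S : Matrix (Fin d) (Fin d) ℂ} (hS : S.IsHermitian) :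
    Matrix (Fin d) (Fin d) ℂ :=
  Matrix.diagonal fun i => (sortDesc hS.eigenvalues i : ℂ)

/-! ### Auxiliary lemmas -/

lemma antitone_sortDesc {d : ℕ} (x : Fin d → ℝ) : Antitone (sortDesc x) := by
  have h := Tuple.monotone_sort (fun j => OrderDual.toDual (x j))
  rw [show (fun j => OrderDual.toDual (x j)) = OrderDual.toDual ∘ x from rfl] at h
  rw [Function.comp_assoc] at h
  exact monotone_toDual_comp_iff.mp h

lemma sorted_sum_mul_le {d k : ℕ} (y c : Fin d → ℝ) (hy : Antitone y)
    (hc0 : ∀ m, 0 ≤ c m) (hc1 : ∀ m, c m ≤ 1) (hk : k ≤ d) (hsum : ∑ m, c m = k) :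
    ∑ m, y m * c m ≤ ∑ j ∈ Finset.univ.filter (fun j : Fin d => (j : ℕ) < k), y j := by
  rcases Nat.eq_zero_or_pos d with hd | hd
  · subst hd; simp
  set F := Finset.univ.filter (fun j : Fin d => (j : ℕ) < k) with hF
  set τ : ℝ := y ⟨min k (d-1), by omega⟩ with hτ
  have hbig : ∀ j ∈ F, τ ≤ y j := by
    intro j hj
    simp only [hF, Finset.mem_filter] at hj
    exact hy (by simp [Fin.le_def]; omega)
  have hsmall : ∀ j ∈ Fᶜ, y j ≤ τ := by
    intro j hj
    simp only [hF, Finset.mem_compl, Finset.mem_filter, Finset.mem_univ, true_and, not_lt] at hj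
    exact hy (by simp [Fin.le_def]; omega)
  have hcard : F.card = k := by
    rw [hF, Finset.card_filter, Fin.sum_univ_eq_sum_range (fun j => if j < k then 1 else 0),
      Finset.sum_ite, Finset.sum_const_zero, add_zero, Finset.sum_const, smul_eq_mul, mul_one]
    have : (Finset.range d).filter (· < k) = Finset.range k := by ext m; simp; omega
    rw [this, Finset.card_range]
  have key : ∑ m ∈ F, (y m * c m - y m) + ∑ m ∈ Fᶜ, y m * c m ≤ 0 := by
    have h1 : ∑ m ∈ F, (y m * c m - y m) ≤ ∑ m ∈ F, τ * (c m - 1) := by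
      apply Finset.sum_le_sum
      intro m hm
      have : y m * c m - y m = y m * (c m - 1) := by ring
      rw [this]
      exact mul_le_mul_of_nonpos_right (hbig m hm) (by linarith [hc1 m])
    have h2 : ∑ m ∈ Fᶜ, y m * c m ≤ ∑ m ∈ Fᶜ, τ * c m := by
      apply Finset.sum_le_sum
      intro m hm
      exact mul_le_mul_of_nonneg_right (hsmall m hm) (hc0 m)
    have h3 : ∑ m ∈ F, τ * (c m - 1) + ∑ m ∈ Fᶜ, τ * c m = τ * (∑ m, c m - k) := by
      rw [← Finset.mul_sum, ← Finset.mul_sum, ← mul_add]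
      congr 1
      rw [Finset.sum_sub_distrib, Finset.sum_const, nsmul_eq_mul, mul_one, hcard,
        add_comm_sub, ← Finset.sum_add_sum_compl F (fun m => c m)]
      ring
    rw [hsum] at h3
    simp at h3
    linarith
  have := Finset.sum_add_sum_compl F (fun m => y m * c m)
  rw [Finset.sum_sub_distrib] at key
  linarith

lemma sum_mul_le_sortDesc {d k : ℕ} (x c : Fin d → ℝ)
    (hc0 : ∀ m, 0 ≤ c m) (hc1 : ∀ m, c m ≤ 1) (hk : k ≤ d) (hsum : ∑ m, c m = k) :
    ∑ m, x m * c m ≤ ∑ j ∈ Finset.univ.filter (fun j : Fin d => (j : ℕ) < k), sortDesc x j := by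
  set σ := Tuple.sort (fun j => OrderDual.toDual (x j)) with hσ
  have h1 : ∑ m, x m * c m = ∑ m, sortDesc x m * (c ∘ σ) m := by
    rw [← Equiv.sum_comp σ (fun m => x m * c m)]
    rfl
  rw [h1]
  exact sorted_sum_mul_le _ _ (antitone_sortDesc x) (fun m => hc0 _) (fun m => hc1 _) hk
    (by rw [show ∑ m, (c ∘ σ) m = ∑ m, c (σ m) from rfl, Equiv.sum_comp σ c, hsum])

lemma trace_diagonal_mul {d : ℕ} (f : Fin d → ℂ) (B : Matrix (Fin d) (Fin d) ℂ) :
    (Matrix.diagonal f * B).trace = ∑ m, f m * B m m := by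
  simp [Matrix.trace, Matrix.diag, Matrix.diagonal_mul]

lemma row_normSq_sum {d : ℕ} {W : Matrix (Fin d) (Fin d) ℂ} (h : W * star W = 1) (m : Fin d) :
    ∑ j, Complex.normSq (W m j) = 1 := by
  have h2 := congrArg (fun X : Matrix (Fin d) (Fin d) ℂ => X m m) h
  simp only [Matrix.mul_apply, Matrix.star_apply, Complex.star_def, Complex.mul_conj, mul_comm,
    Matrix.one_apply_eq] at h2
  exact_mod_cast h2

lemma col_normSq_sum {d : ℕ} {W : Matrix (Fin d) (Fin d) ℂ} (h : star W * W = 1) (j : Fin d) :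
    ∑ m, Complex.normSq (W m j) = 1 := by
  have h2 := congrArg (fun X : Matrix (Fin d) (Fin d) ℂ => X j j) h
  simp only [Matrix.mul_apply, Matrix.star_apply, Complex.star_def, Complex.mul_conj, mul_comm,
    Matrix.one_apply_eq] at h2
  exact_mod_cast h2

lemma herm_trace {d : ℕ} {A : Matrix (Fin d) (Fin d) ℂ} (hA : A.IsHermitian) :
    A.trace = ∑ m, (hA.eigenvalues m : ℂ) := by
  conv_lhs => rw [hA.spectral_theorem, Unitary.conjStarAlgAut_apply]
  rw [Matrix.trace_mul_comm, ← Matrix.mul_assoc,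
    Unitary.coe_star_mul_self hA.eigenvectorUnitary, Matrix.one_mul, Matrix.trace_diagonal]
  rfl

lemma trace_mul_proj {d : ℕ} {A : Matrix (Fin d) (Fin d) ℂ} (hA : A.IsHermitian)
    (V : Matrix.unitaryGroup (Fin d) ℂ) (t : Finset (Fin d)) :
    (A * ((V : Matrix (Fin d) (Fin d) ℂ) * Matrix.diagonal (fun j => if j ∈ t then (1:ℂ) else 0)
      * star (V : Matrix (Fin d) (Fin d) ℂ))).trace
    = ∑ m, (hA.eigenvalues m : ℂ) *
        ∑ j ∈ t, (Complex.normSq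
          ((star (hA.eigenvectorUnitary : Matrix (Fin d) (Fin d) ℂ) * V) m j) : ℂ) := by
  set U : Matrix (Fin d) (Fin d) ℂ := (hA.eigenvectorUnitary : Matrix (Fin d) (Fin d) ℂ) with hU
  set M : Matrix (Fin d) (Fin d) ℂ := star U * (V : Matrix (Fin d) (Fin d) ℂ) with hM
  set D : Matrix (Fin d) (Fin d) ℂ := Matrix.diagonal (RCLike.ofReal ∘ hA.eigenvalues) with hD
  have hUU : star U * U = 1 := Unitary.coe_star_mul_self hA.eigenvectorUnitary
  have hUU' : U * star U = 1 := Unitary.coe_mul_star_self hA.eigenvectorUnitary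
  set χ : Matrix (Fin d) (Fin d) ℂ := Matrix.diagonal (fun j => if j ∈ t then (1:ℂ) else 0)
    with hχ
  have key : A * ((V : Matrix (Fin d) (Fin d) ℂ) * χ * star (V : Matrix (Fin d) (Fin d) ℂ))
      = U * (D * (M * χ * star M)) * star U := by
    conv_lhs => rw [hA.spectral_theorem, Unitary.conjStarAlgAut_apply]
    rw [hM, Matrix.star_mul, star_star]
    simp only [Matrix.mul_assoc, ← hU, ← hD, hUU', Matrix.mul_one]
  rw [key, Matrix.trace_mul_cycle, ← Matrix.mul_assoc, hUU, Matrix.one_mul, trace_diagonal_mul]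
  refine Finset.sum_congr rfl fun m _ => ?_
  have h1 : (M * χ * star M) m m
      = ∑ j, (if j ∈ t then (1:ℂ) else 0) * (M m j * (starRingEnd ℂ) (M m j)) := by
    rw [Matrix.mul_apply]
    refine Finset.sum_congr rfl fun j _ => ?_
    rw [hχ, Matrix.mul_diagonal, Matrix.star_apply, Complex.star_def]
    ring
  simp only [hD, Matrix.diagonal_apply_eq, Function.comp_apply, RCLike.ofReal_alg]
  rw [h1]
  simp only [Complex.mul_conj, ite_mul, one_mul, zero_mul]
  rw [Finset.sum_ite_mem, Finset.univ_inter]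
  norm_num

/-- Packaged Ky Fan bound : `∑_m λ_m(A) c_m ≤ ∑_{j<k} (sortDesc λ(A)) j` where
`c_m = ∑_{j ∈ t} |(star W * V)_{m j}|²` comes from a projection of rank `k = t.card`. -/
lemma eig_weighted_le {d : ℕ} {A : Matrix (Fin d) (Fin d) ℂ} (hA : A.IsHermitian)
    (V : Matrix.unitaryGroup (Fin d) ℂ) (t : Finset (Fin d)) :
    ∑ m, hA.eigenvalues m *
        (∑ j ∈ t, Complex.normSq
          ((star (hA.eigenvectorUnitary : Matrix (Fin d) (Fin d) ℂ) * V) m j))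
      ≤ ∑ j ∈ Finset.univ.filter (fun j : Fin d => (j : ℕ) < t.card),
          sortDesc hA.eigenvalues j := by
  set W : Matrix (Fin d) (Fin d) ℂ :=
    star (hA.eigenvectorUnitary : Matrix (Fin d) (Fin d) ℂ) * V with hW
  have hWmem : W ∈ Matrix.unitaryGroup (Fin d) ℂ := by
    rw [hW]
    exact mul_mem (Unitary.star_mem hA.eigenvectorUnitary.2) V.2
  have hrow : ∀ m, ∑ j, Complex.normSq (W m j) = 1 :=
    row_normSq_sum (Matrix.mem_unitaryGroup_iff.mp hWmem)
  have hcol : ∀ j, ∑ m, Complex.normSq (W m j) = 1 :=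
    col_normSq_sum (Matrix.mem_unitaryGroup_iff'.mp hWmem)
  apply sum_mul_le_sortDesc
  · intro m
    exact Finset.sum_nonneg fun j _ => Complex.normSq_nonneg _
  · intro m
    calc ∑ j ∈ t, Complex.normSq (W m j) ≤ ∑ j, Complex.normSq (W m j) :=
          Finset.sum_le_sum_of_subset_of_nonneg (Finset.subset_univ t)
            (fun j _ _ => Complex.normSq_nonneg _)
      _ = 1 := hrow m
  · simpa using (Finset.card_le_card (Finset.subset_univ t)).trans_eq (by simp)
  · have hsw : ∑ m, ∑ j ∈ t, Complex.normSq (W m j)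
        = ∑ j ∈ t, ∑ m, Complex.normSq (W m j) := Finset.sum_comm
    rw [hsw]
    simp [hcol]

lemma card_filter_val_lt {d k : ℕ} (hk : k ≤ d) :
    (Finset.univ.filter (fun j : Fin d => (j : ℕ) < k)).card = k := by
  rw [Finset.card_filter, Fin.sum_univ_eq_sum_range (fun j => if j < k then 1 else 0),
    Finset.sum_ite, Finset.sum_const_zero, add_zero, Finset.sum_const, smul_eq_mul, mul_one]
  have : (Finset.range d).filter (· < k) = Finset.range k := by ext m; simp; omega
  rw [this, Finset.card_range]

lemma sum_sortDesc {d : ℕ} (x : Fin d → ℝ) : ∑ j, sortDesc x j = ∑ j, x j :=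
  Equiv.sum_comp (Tuple.sort (fun j => OrderDual.toDual (x j))) x

/-- Ky Fan's majorization relation: `Σ_i S_i` is majorized by `Σ_i S_i↓`. -/
theorem sum_majorized_by_sum_down {d s : ℕ} (S : Fin s → Matrix (Fin d) (Fin d) ℂ)
    (hS : ∀ i, (S i).IsHermitian)
    (h₁ : (∑ i, matDown (hS i)).IsHermitian) (h₂ : (∑ i, S i).IsHermitian) :
    Majorizes h₁.eigenvalues h₂.eigenvalues := by
  classical
  have hd : ∀ t : Finset (Fin d), t.card ≤ d := fun t => by
    simpa using Finset.card_le_card (Finset.subset_univ t)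
  have hA₁ : (∑ i, matDown (hS i))
      = Matrix.diagonal (fun j => ((∑ i, sortDesc (hS i).eigenvalues j : ℝ) : ℂ)) := by
    ext m j
    by_cases h : m = j
    · subst h
      simp [matDown, Matrix.diagonal_apply_eq, Matrix.sum_apply]
    · simp [matDown, Matrix.diagonal_apply_ne _ h, Matrix.sum_apply]
  constructor
  · intro t
    set F : Finset (Fin d) := Finset.univ.filter (fun j : Fin d => (j : ℕ) < t.card) with hF
    have hFcard : F.card = t.card := card_filter_val_lt (hd t)
    -- Step A : ∑_{j ∈ t} μ j = weighted eigenvalue sums of the S i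
    have stepA : ∑ j ∈ t, h₂.eigenvalues j
        = ∑ i, ∑ m, (hS i).eigenvalues m * ∑ j ∈ t, Complex.normSq
            ((star ((hS i).eigenvectorUnitary : Matrix (Fin d) (Fin d) ℂ)
              * (h₂.eigenvectorUnitary : Matrix (Fin d) (Fin d) ℂ)) m j) := by
      have h1 : ((∑ j ∈ t, h₂.eigenvalues j : ℝ) : ℂ)
          = ((∑ i, ∑ m, (hS i).eigenvalues m * ∑ j ∈ t, Complex.normSq
              ((star ((hS i).eigenvectorUnitary : Matrix (Fin d) (Fin d) ℂ)
                * (h₂.eigenvectorUnitary : Matrix (Fin d) (Fin d) ℂ)) m j) : ℝ) : ℂ) := by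
        push_cast
        calc ∑ j ∈ t, (h₂.eigenvalues j : ℂ)
            = ((∑ i, S i) * ((h₂.eigenvectorUnitary : Matrix (Fin d) (Fin d) ℂ)
                * Matrix.diagonal (fun j => if j ∈ t then (1:ℂ) else 0)
                * star (h₂.eigenvectorUnitary : Matrix (Fin d) (Fin d) ℂ))).trace := by
              rw [trace_mul_proj h₂ h₂.eigenvectorUnitary t]
              rw [show star ((h₂.eigenvectorUnitary : Matrix (Fin d) (Fin d) ℂ))
                  * (h₂.eigenvectorUnitary : Matrix (Fin d) (Fin d) ℂ) = 1 from
                Unitary.coe_star_mul_self h₂.eigenvectorUnitary]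
              have h2 : ∀ m : Fin d, ∑ j ∈ t,
                  ((Complex.normSq ((1 : Matrix (Fin d) (Fin d) ℂ) m j) : ℝ) : ℂ)
                  = if m ∈ t then 1 else 0 := by
                intro m
                simp only [Matrix.one_apply, apply_ite Complex.normSq, Complex.normSq_one,
                  Complex.normSq_zero, apply_ite (fun x : ℝ => (x : ℂ)), Complex.ofReal_one,
                  Complex.ofReal_zero, Finset.sum_ite_eq]
              refine Eq.symm ?_
              calc ∑ m, ((h₂.eigenvalues m : ℝ) : ℂ) * ∑ j ∈ t,
                    ((Complex.normSq ((1 : Matrix (Fin d) (Fin d) ℂ) m j) : ℝ) : ℂ)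
                  = ∑ m, (if m ∈ t then ((h₂.eigenvalues m : ℝ) : ℂ) else 0) := by
                    refine Finset.sum_congr rfl fun m _ => ?_
                    rw [h2 m]
                    split <;> simp
                _ = ∑ j ∈ t, ((h₂.eigenvalues j : ℝ) : ℂ) := by
                    rw [Finset.sum_ite_mem, Finset.univ_inter]
          _ = ∑ i, ((S i) * ((h₂.eigenvectorUnitary : Matrix (Fin d) (Fin d) ℂ)
                * Matrix.diagonal (fun j => if j ∈ t then (1:ℂ) else 0)
                * star (h₂.eigenvectorUnitary : Matrix (Fin d) (Fin d) ℂ))).trace := by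
              rw [Finset.sum_mul, Matrix.trace_sum]
          _ = ∑ i, ∑ m, ((hS i).eigenvalues m : ℂ) * ∑ j ∈ t, ((Complex.normSq
                ((star ((hS i).eigenvectorUnitary : Matrix (Fin d) (Fin d) ℂ)
                  * (h₂.eigenvectorUnitary : Matrix (Fin d) (Fin d) ℂ)) m j) : ℝ) : ℂ) :=
              Finset.sum_congr rfl fun i _ => trace_mul_proj (hS i) h₂.eigenvectorUnitary t
      exact_mod_cast h1
    -- Step B : each weighted sum is at most the top-k partial sum of sortDesc
    have stepB : ∑ i, ∑ m, (hS i).eigenvalues m * ∑ j ∈ t, Complex.normSq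
            ((star ((hS i).eigenvectorUnitary : Matrix (Fin d) (Fin d) ℂ)
              * (h₂.eigenvectorUnitary : Matrix (Fin d) (Fin d) ℂ)) m j)
        ≤ ∑ j ∈ F, ∑ i, sortDesc (hS i).eigenvalues j := by
      calc ∑ i, ∑ m, (hS i).eigenvalues m * ∑ j ∈ t, Complex.normSq
            ((star ((hS i).eigenvectorUnitary : Matrix (Fin d) (Fin d) ℂ)
              * (h₂.eigenvectorUnitary : Matrix (Fin d) (Fin d) ℂ)) m j)
          ≤ ∑ i, ∑ j ∈ F, sortDesc (hS i).eigenvalues j :=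
            Finset.sum_le_sum fun i _ => eig_weighted_le (hS i) h₂.eigenvectorUnitary t
        _ = ∑ j ∈ F, ∑ i, sortDesc (hS i).eigenvalues j := Finset.sum_comm
    -- Step C : the diagonal partial sum as a weighted eigenvalue sum of A₁
    have stepC : ∑ j ∈ F, ∑ i, sortDesc (hS i).eigenvalues j
        = ∑ m, h₁.eigenvalues m * ∑ j ∈ F, Complex.normSq
            ((star ((h₁).eigenvectorUnitary : Matrix (Fin d) (Fin d) ℂ)
              * ((1 : Matrix.unitaryGroup (Fin d) ℂ) : Matrix (Fin d) (Fin d) ℂ)) m j) := by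
      have h1 : ((∑ j ∈ F, ∑ i, sortDesc (hS i).eigenvalues j : ℝ) : ℂ)
          = ((∑ m, h₁.eigenvalues m * ∑ j ∈ F, Complex.normSq
              ((star ((h₁).eigenvectorUnitary : Matrix (Fin d) (Fin d) ℂ)
                * ((1 : Matrix.unitaryGroup (Fin d) ℂ) : Matrix (Fin d) (Fin d) ℂ)) m j)
              : ℝ) : ℂ) := by
        push_cast
        calc ∑ j ∈ F, ∑ i, ((sortDesc (hS i).eigenvalues j : ℝ) : ℂ)
            = ((∑ i, matDown (hS i)) * (((1 : Matrix.unitaryGroup (Fin d) ℂ)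
                  : Matrix (Fin d) (Fin d) ℂ)
                * Matrix.diagonal (fun j => if j ∈ F then (1:ℂ) else 0)
                * star ((1 : Matrix.unitaryGroup (Fin d) ℂ)
                  : Matrix (Fin d) (Fin d) ℂ))).trace := by
              rw [hA₁]
              simp only [OneMemClass.coe_one, star_one, Matrix.one_mul, Matrix.mul_one]
              rw [trace_diagonal_mul]
              simp only [Matrix.diagonal_apply_eq, mul_ite, mul_one, mul_zero]
              rw [Finset.sum_ite_mem, Finset.univ_inter]
              push_cast
              rfl
          _ = ∑ m, (h₁.eigenvalues m : ℂ) * ∑ j ∈ F, ((Complex.normSq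
                  ((star ((h₁).eigenvectorUnitary : Matrix (Fin d) (Fin d) ℂ)
                    * ((1 : Matrix.unitaryGroup (Fin d) ℂ)
                      : Matrix (Fin d) (Fin d) ℂ)) m j) : ℝ) : ℂ) :=
              trace_mul_proj h₁ 1 F
      exact_mod_cast h1
    -- Step D : Ky Fan bound for A₁
    have stepD : ∑ m, h₁.eigenvalues m * ∑ j ∈ F, Complex.normSq
            ((star ((h₁).eigenvectorUnitary : Matrix (Fin d) (Fin d) ℂ)
              * ((1 : Matrix.unitaryGroup (Fin d) ℂ) : Matrix (Fin d) (Fin d) ℂ)) m j)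
        ≤ ∑ j ∈ F, sortDesc h₁.eigenvalues j := by
      have h := eig_weighted_le h₁ 1 F
      rwa [hFcard, ← hF] at h
    -- assemble the witness subset
    refine ⟨F.map (Tuple.sort (fun j => OrderDual.toDual (h₁.eigenvalues j))).toEmbedding,
      ?_, ?_⟩
    · rw [Finset.card_map, hFcard]
    · have hmap : ∑ j ∈ F.map (Tuple.sort
            (fun j => OrderDual.toDual (h₁.eigenvalues j))).toEmbedding, h₁.eigenvalues j
          = ∑ j ∈ F, sortDesc h₁.eigenvalues j := by
        rw [Finset.sum_map]
        rfl
      rw [hmap]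
      calc ∑ j ∈ t, h₂.eigenvalues j
          = _ := stepA
        _ ≤ ∑ j ∈ F, ∑ i, sortDesc (hS i).eigenvalues j := stepB
        _ = _ := stepC
        _ ≤ ∑ j ∈ F, sortDesc h₁.eigenvalues j := stepD
  · -- total sums agree: both are the (real) trace
    have h1 : ((∑ j, h₂.eigenvalues j : ℝ) : ℂ) = ((∑ j, h₁.eigenvalues j : ℝ) : ℂ) := by
      push_cast
      rw [← herm_trace h₂, ← herm_trace h₁]
      rw [Matrix.trace_sum, Matrix.trace_sum]
      refine Finset.sum_congr rfl fun i _ => ?_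
      rw [herm_trace (hS i)]
      rw [show (matDown (hS i)).trace
          = ∑ j, ((sortDesc (hS i).eigenvalues j : ℝ) : ℂ) from Matrix.trace_diagonal _]
      rw [← Complex.ofReal_sum, ← Complex.ofReal_sum, sum_sortDesc]
    exact_mod_cast h1
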